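/- For every monoid H, the reduced finitary power monoid P_{fin,1}(H) is Dedekind-finite, its only unit is the identity {1_H}, it satisfies the ACC on principal two-sided ideals, and it is factorable. -/
import Mathlib


open scoped Pointwise

/-- Two-sided divisibility in a monoid: `x` divides `y` if `y = u * x * v` for some `u, v`. -/
def DvdTS {M : Type*} [Monoid M] (x y : M) : Prop := ∃ u v : M, y = u * x * v

/-- A unit-divisor is a divisor of the identity. -/
def IsUnitDivisor {M : Type*} [Monoid M] (x : M) : Prop := DvdTS x 1

/-- `x` is a proper divisor of `y` if `x` divides `y` but `y` does not divide `x`. -/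
def IsProperDivisorTS {M : Type*} [Monoid M] (x y : M) : Prop := DvdTS x y ∧ ¬ DvdTS y x

/-- An atom is a non-unit that is not a product of two non-units. -/
def IsAtomTS {M : Type*} [Monoid M] (a : M) : Prop :=
  ¬ IsUnit a ∧ ∀ b c : M, a = b * c → IsUnit b ∨ IsUnit c

/-- A quark is a non-unit-divisor all of whose proper divisors are unit-divisors. -/
def IsQuarkTS {M : Type*} [Monoid M] (a : M) : Prop :=
  ¬ IsUnitDivisor a ∧ ∀ b : M, IsProperDivisorTS b a → IsUnitDivisor b

/-- An irreducible is a non-unit-divisor with no factorization `a = b * c` into proper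
divisors that are not unit-divisors. -/
def IsIrredTS {M : Type*} [Monoid M] (a : M) : Prop :=
  ¬ IsUnitDivisor a ∧
    ¬ ∃ b c : M, a = b * c ∧ IsProperDivisorTS b a ∧ IsProperDivisorTS c a ∧
      ¬ IsUnitDivisor b ∧ ¬ IsUnitDivisor c

def DedekindFiniteM (M : Type*) [Monoid M] : Prop := ∀ x y : M, x * y = 1 → y * x = 1

/-- ACC on principal two-sided ideals: no infinite sequence of consecutive proper divisors. -/
def ACCPrincipalTS (M : Type*) [Monoid M] : Prop :=
  ¬ ∃ f : ℕ → M, ∀ n : ℕ, IsProperDivisorTS (f (n + 1)) (f n)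

/-- Factorable: every non-unit-divisor is a (non-empty) product of irreducibles. -/
def FactorableM (M : Type*) [Monoid M] : Prop :=
  ∀ x : M, ¬ IsUnitDivisor x →
    ∃ l : List M, l ≠ [] ∧ (∀ a ∈ l, IsIrredTS a) ∧ l.prod = x

/-- Atomic: every non-unit-divisor is a (non-empty) product of atoms. -/
def AtomicM (M : Type*) [Monoid M] : Prop :=
  ∀ x : M, ¬ IsUnitDivisor x →
    ∃ l : List M, l ≠ [] ∧ (∀ a ∈ l, IsAtomTS a) ∧ l.prod = x

/-- The finitary power monoid: non-empty finite subsets of `H` under setwise multiplication. -/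
def PfinM (H : Type*) [Monoid H] : Submonoid (Set H) where
  carrier := {X : Set H | X.Finite ∧ X.Nonempty}
  mul_mem' := fun hX hY => ⟨hX.1.mul hY.1, hX.2.mul hY.2⟩
  one_mem' := ⟨Set.finite_one, 1, Set.mem_one.mpr rfl⟩

/-- The restricted finitary power monoid: non-empty finite subsets of `H` containing a unit. -/
def PfinTimes (H : Type*) [Monoid H] : Submonoid (Set H) where
  carrier := {X : Set H | X.Finite ∧ ∃ u ∈ X, IsUnit u}
  mul_mem' := by
    rintro X Y ⟨hXf, u, hu, hu'⟩ ⟨hYf, v, hv, hv'⟩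
    exact ⟨hXf.mul hYf, u * v, Set.mul_mem_mul hu hv, hu'.mul hv'⟩
  one_mem' := ⟨Set.finite_one, 1, Set.mem_one.mpr rfl, isUnit_one⟩

/-- The reduced finitary power monoid: finite subsets of `H` containing `1`. -/
def PfinOne (H : Type*) [Monoid H] : Submonoid (Set H) where
  carrier := {X : Set H | X.Finite ∧ (1 : H) ∈ X}
  mul_mem' := by
    rintro X Y ⟨hXf, hX1⟩ ⟨hYf, hY1⟩
    exact ⟨hXf.mul hYf, by simpa using Set.mul_mem_mul hX1 hY1⟩
  one_mem' := ⟨Set.finite_one, Set.mem_one.mpr rfl⟩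

lemma mem_PfinM {H : Type*} [Monoid H] {X : Set H} :
    X ∈ PfinM H ↔ X.Finite ∧ X.Nonempty := Iff.rfl

lemma mem_PfinTimes {H : Type*} [Monoid H] {X : Set H} :
    X ∈ PfinTimes H ↔ X.Finite ∧ ∃ u ∈ X, IsUnit u := Iff.rfl

lemma mem_PfinOne {H : Type*} [Monoid H] {X : Set H} :
    X ∈ PfinOne H ↔ X.Finite ∧ (1 : H) ∈ X := Iff.rfl

/-- Acyclic: `u * x * v ≠ x` whenever `u` or `v` is a non-unit. -/
def AcyclicM (M : Type*) [Monoid M] : Prop :=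
  ∀ u v x : M, (¬ IsUnit u ∨ ¬ IsUnit v) → u * x * v ≠ x

/-- Unit-cancellative: `x * y ≠ x ≠ y * x` whenever `y` is a non-unit. -/
def UnitCancellativeM (M : Type*) [Monoid M] : Prop :=
  ∀ x y : M, ¬ IsUnit y → x * y ≠ x ∧ y * x ≠ x

/-- Strongly unit-cancellative: `x * y ≠ x ≠ y * x` whenever `y ≠ 1`. -/
def StrongUnitCancellativeM (M : Type*) [Monoid M] : Prop :=
  ∀ x y : M, y ≠ 1 → x * y ≠ x ∧ y * x ≠ x

/-- Torsion-free: the identity is the only element with finitely many powers. -/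
def TorsionFreeM (M : Type*) [Monoid M] : Prop :=
  ∀ x : M, (Set.range fun k : ℕ => x ^ k).Finite → x = 1

/-- Cancellative monoid. -/
def CancellativeM (M : Type*) [Monoid M] : Prop :=
  ∀ a x y : M, (a * x = a * y → x = y) ∧ (x * a = y * a → x = y)

/-- The set of lengths of (irreducible) factorizations of `x`, with the conventions
`L(1) = {0}` and `L(u) = ∅` for a unit-divisor `u ≠ 1`. -/
def LengthSet {M : Type*} [Monoid M] (x : M) : Set ℕ :=
  {n | (x = 1 ∧ n = 0) ∨
    (¬ IsUnitDivisor x ∧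
      ∃ l : List M, l.length = n ∧ l ≠ [] ∧ (∀ a ∈ l, IsIrredTS a) ∧ l.prod = x)}

/-- The system of lengths: the family of non-empty length sets. -/
def SystemOfLengths (M : Type*) [Monoid M] : Set (Set ℕ) :=
  {L | L.Nonempty ∧ ∃ x : M, LengthSet x = L}

section PfinOneAux
variable {H : Type*} [Monoid H]

lemma pfinOne_left_subset (X Y : PfinOne H) :
    (X : Set H) ⊆ ((X * Y : PfinOne H) : Set H) := by
  intro x hx
  have := Set.mul_mem_mul hx Y.2.2
  simpa using this

lemma pfinOne_right_subset (X Y : PfinOne H) :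
    (Y : Set H) ⊆ ((X * Y : PfinOne H) : Set H) := by
  intro y hy
  have := Set.mul_mem_mul X.2.2 hy
  simpa using this

lemma pfinOne_subset_of_dvd {X Y : PfinOne H} (h : DvdTS X Y) :
    (X : Set H) ⊆ (Y : Set H) := by
  obtain ⟨u, v, rfl⟩ := h
  exact fun x hx => pfinOne_left_subset (u * X) v (pfinOne_right_subset u X hx)

lemma pfinOne_eq_one_of_subset {X : PfinOne H}
    (h : (X : Set H) ⊆ ((1 : PfinOne H) : Set H)) : X = 1 := by
  apply Subtype.ext
  apply subset_antisymm h
  intro x hx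
  rcases Set.mem_one.mp hx with rfl
  exact X.2.2

lemma pfinOne_unitDivisor_iff {X : PfinOne H} : IsUnitDivisor X ↔ X = 1 := by
  constructor
  · intro h
    exact pfinOne_eq_one_of_subset (pfinOne_subset_of_dvd h)
  · rintro rfl
    exact ⟨1, 1, by simp⟩

lemma pfinOne_ssubset_of_proper {b X : PfinOne H} (h : IsProperDivisorTS b X) :
    (b : Set H) ⊂ (X : Set H) := by
  refine ⟨pfinOne_subset_of_dvd h.1, fun hsub => h.2 ?_⟩
  have : b = X := Subtype.ext (subset_antisymm (pfinOne_subset_of_dvd h.1) hsub)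
  exact ⟨1, 1, by simp [this]⟩

end PfinOneAux

/-- `P_{fin,1}(H)` is Dedekind-finite, its only unit is the identity,
it satisfies the ACC on principal two-sided ideals, and it is factorable. -/
theorem pfinOne_basic_properties (H : Type*) [Monoid H] :
    DedekindFiniteM (PfinOne H) ∧
    (∀ X : PfinOne H, IsUnit X → X = 1) ∧
    ACCPrincipalTS (PfinOne H) ∧
    FactorableM (PfinOne H) := by
  have hmul1 : ∀ X Y : PfinOne H, X * Y = 1 → X = 1 ∧ Y = 1 := by
    intro X Y h
    constructor
    · exact pfinOne_eq_one_of_subset (h ▸ pfinOne_left_subset X Y)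
    · exact pfinOne_eq_one_of_subset (h ▸ pfinOne_right_subset X Y)
  refine ⟨?_, ?_, ?_, ?_⟩
  · intro X Y h
    obtain ⟨h1, h2⟩ := hmul1 X Y h
    simp [h1, h2]
  · intro X hX
    obtain ⟨u, hu⟩ := hX
    have h := u.mul_inv
    rw [hu] at h
    exact (hmul1 X _ h).1
  · rintro ⟨f, hf⟩
    have hdec : ∀ n, ((f (n + 1) : Set H)).ncard < ((f n : Set H)).ncard := by
      intro n
      exact Set.ncard_lt_ncard (pfinOne_ssubset_of_proper (hf n)) (f n).2.1
    have h2 : ∀ n, ((f n : Set H)).ncard + n ≤ ((f 0 : Set H)).ncard := by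
      intro n
      induction n with
      | zero => simp
      | succ n ih => have := hdec n; omega
    have := h2 (((f 0 : Set H)).ncard + 1)
    omega
  · have fact : ∀ n (X : PfinOne H), ((X : Set H)).ncard = n → ¬ IsUnitDivisor X →
        ∃ l : List (PfinOne H), l ≠ [] ∧ (∀ a ∈ l, IsIrredTS a) ∧ l.prod = X := by
      intro n
      induction n using Nat.strong_induction_on with
      | _ n ih =>
        intro X hn hX
        by_cases hirr : IsIrredTS X
        · exact ⟨[X], by simp, by simpa using hirr, by simp⟩
        · rw [IsIrredTS, not_and_or] at hirr
          rcases hirr with h | h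
          · exact absurd (not_not.mp h) hX
          · obtain ⟨b, c, hbc, hb, hc, hbnd, hcnd⟩ := not_not.mp h
            have hbcard : ((b : Set H)).ncard < n :=
              hn ▸ Set.ncard_lt_ncard (pfinOne_ssubset_of_proper hb) X.2.1
            have hccard : ((c : Set H)).ncard < n :=
              hn ▸ Set.ncard_lt_ncard (pfinOne_ssubset_of_proper hc) X.2.1
            obtain ⟨lb, hlb1, hlb2, hlb3⟩ := ih _ hbcard b rfl hbnd
            obtain ⟨lc, hlc1, hlc2, hlc3⟩ := ih _ hccard c rfl hcnd
            refine ⟨lb ++ lc, by simp [hlb1], ?_, by simp [hlb3, hlc3, hbc]⟩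
            intro a ha
            rcases List.mem_append.mp ha with h' | h'
            · exact hlb2 a h'
            · exact hlc2 a h'
    exact fun X hX => fact _ X rfl hX
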